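/- Let K ⊂ ℝ^n be a polytope with at least two extreme points and let v be an extreme point of K. Then the simplicial constant α_K(v) = inf{‖v − x‖₂ : x ∈ conv(vert(K) \ {v})} equals the Hausdorff distance between K and conv(vert(K) \ {v}). -/

import Mathlib

/-- The simplicial constant of a vertex `v` of a polytope `K`: the (Euclidean) distance
from `v` to the convex hull of the remaining extreme points. -/
noncomputable def simplicialConst {n : ℕ} (K : Set (EuclideanSpace ℝ (Fin n)))
    (v : EuclideanSpace ℝ (Fin n)) : ℝ :=
  Metric.infDist v (convexHull ℝ (K.extremePoints ℝ \ {v}))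

/-- For a polytope `K` with at least two extreme points and an extreme point `v` of
`K`, the simplicial constant of `v` equals the Hausdorff distance between `K` and the
convex hull of the remaining extreme points. -/
theorem simplicialConst_eq_hausdorffDist (n : ℕ) (S : Set (EuclideanSpace ℝ (Fin n)))
    (hS : S.Finite) (K : Set (EuclideanSpace ℝ (Fin n))) (hK : K = convexHull ℝ S)
    (hnt : (K.extremePoints ℝ).Nontrivial)
    (v : EuclideanSpace ℝ (Fin n)) (hv : v ∈ K.extremePoints ℝ) :
    simplicialConst K v =
      Metric.hausdorffDist K (convexHull ℝ (K.extremePoints ℝ \ {v})) := by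
  classical
  set E := K.extremePoints ℝ with hE
  set Q := convexHull ℝ (E \ {v}) with hQ
  -- basic facts
  have hKcomp : IsCompact K := hK ▸ hS.isCompact_convexHull ℝ
  have hKconv : Convex ℝ K := hK ▸ convex_convexHull ℝ S
  have hES : E ⊆ S := by rw [hE, hK]; exact extremePoints_convexHull_subset
  have hEfin : E.Finite := hS.subset hES
  -- K is the convex hull of its extreme points
  have hKE : K = convexHull ℝ E := by
    have h1 := closure_convexHull_extremePoints hKcomp hKconv
    rw [← h1, (hEfin.isCompact_convexHull ℝ).isClosed.closure_eq]
  -- Q nonempty, compact, subset of K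
  obtain ⟨w, hwE, hwv⟩ := hnt.exists_ne v
  have hEvne : (E \ {v}).Nonempty := ⟨w, hwE, hwv⟩
  have hQne : Q.Nonempty := ⟨w, subset_convexHull ℝ _ ⟨hwE, hwv⟩⟩
  have hQcomp : IsCompact Q := (hEfin.diff (t := {v})).isCompact_convexHull ℝ
  have hQK : Q ⊆ K := by
    rw [hKE]; exact convexHull_mono Set.diff_subset
  have hKne : K.Nonempty := ⟨v, hv.1⟩
  -- nearest point in Q to v
  obtain ⟨q0, hq0Q, hq0⟩ := hQcomp.exists_infDist_eq_dist hQne v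
  have hr : simplicialConst K v = dist v q0 := hq0
  -- every point of K is within `dist v q0` of Q
  have hmain : ∀ x ∈ K, ∃ y ∈ Q, dist x y ≤ dist v q0 := by
    intro x hx
    have hEins : E = insert v (E \ {v}) := by
      rw [Set.insert_diff_singleton, Set.insert_eq_self.2 hv]
    have hx' : x ∈ convexJoin ℝ {v} Q := by
      rw [← convexHull_singleton (𝕜 := ℝ) v, hQ, ← convexHull_union (Set.singleton_nonempty v)
        hEvne, Set.singleton_union, ← hEins, ← hKE]
      exact hx
    rw [mem_convexJoin] at hx'
    obtain ⟨a, ha, q, hqQ, hseg⟩ := hx'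
    rw [Set.mem_singleton_iff] at ha
    rw [ha] at hseg
    obtain ⟨s, t, hs, ht, hst, hxeq⟩ := hseg
    refine ⟨s • q0 + t • q, convex_convexHull ℝ _ hq0Q hqQ hs ht hst, ?_⟩
    rw [← hxeq]
    have hd : dist (s • v + t • q) (s • q0 + t • q) = s * dist v q0 := by
      rw [dist_eq_norm, dist_eq_norm]
      have : s • v + t • q - (s • q0 + t • q) = s • (v - q0) := by
        module
      rw [this, norm_smul, Real.norm_of_nonneg hs]
    rw [hd]
    calc s * dist v q0 ≤ 1 * dist v q0 := by
          apply mul_le_mul_of_nonneg_right _ dist_nonneg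
          linarith
      _ = dist v q0 := one_mul _
  have hedist : EMetric.hausdorffEdist K Q ≠ ⊤ :=
    Metric.hausdorffEdist_ne_top_of_nonempty_of_bounded hKne hQne hKcomp.isBounded
      hQcomp.isBounded
  have hle : Metric.hausdorffDist K Q ≤ simplicialConst K v := by
    rw [hr]
    refine Metric.hausdorffDist_le_of_mem_dist dist_nonneg hmain ?_
    intro y hy
    exact ⟨y, hQK hy, by rw [dist_self]; exact dist_nonneg⟩
  have hge : simplicialConst K v ≤ Metric.hausdorffDist K Q :=
    Metric.infDist_le_hausdorffDist_of_mem hv.1 hedist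
  exact le_antisymm hge hle
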